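/- For any two finite nonnegative measures μ₀, μ₁ on a measurable space Ω, He₂²(μ₀,μ₁) = min over μ ∈ M(Ω) of KL(μ | μ₀) + KL(μ | μ₁), where KL(γ | μ) := ∫ (ρ ln ρ − ρ + 1) dμ if γ = ρμ ≪ μ and +∞ otherwise, and He₂²(μ₀,μ₁) = ∫ (√ρ₀ − √ρ₁)² dλ for any common dominating measure λ. -/

import Mathlib

open MeasureTheory ENNReal
open scoped Classical

/-- Kullback–Leibler divergence `KL(γ|μ) = ∫ (ρ ln ρ − ρ + 1) dμ` if `γ = ρμ ≪ μ`,
`+∞` otherwise (the integrand is nonnegative). -/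
noncomputable def KLdiv {Ω : Type*} [MeasurableSpace Ω] (γ μ : Measure Ω) : ℝ≥0∞ :=
  if γ ≪ μ then
    ∫⁻ x, ENNReal.ofReal
      ((γ.rnDeriv μ x).toReal * Real.log (γ.rnDeriv μ x).toReal
        - (γ.rnDeriv μ x).toReal + 1) ∂μ
  else ⊤

private lemma g_nonneg {t : ℝ} (ht : 0 ≤ t) : 0 ≤ t * Real.log t - t + 1 := by
  rcases ht.eq_or_lt with h | h
  · simp [← h]
  · have h1 : Real.log t⁻¹ ≤ t⁻¹ - 1 := Real.log_le_sub_one_of_pos (inv_pos.mpr h)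
    rw [Real.log_inv] at h1
    have h2 : t * (-Real.log t) ≤ t * (t⁻¹ - 1) := mul_le_mul_of_nonneg_left h1 ht
    rw [mul_sub, mul_inv_cancel₀ h.ne'] at h2
    nlinarith

private lemma gibbs {s c : ℝ} (hs : 0 ≤ s) (hc : 0 < c) :
    0 ≤ s * Real.log s - s * Real.log c - s + c := by
  rcases hs.eq_or_lt with h | h
  · rw [← h]
    simp
    linarith
  · have h1 := g_nonneg (t := s / c) (by positivity)
    have h2 : 0 ≤ c * (s / c * Real.log (s / c) - s / c + 1) := mul_nonneg hc.le h1
    rw [Real.log_div h.ne' hc.ne'] at h2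
    have h4 : c * (s / c * (Real.log s - Real.log c) - s / c + 1)
        = s * Real.log s - s * Real.log c - s + c := by
      field_simp
    linarith [h4 ▸ h2]

private lemma real_key {a b s t₀ t₁ : ℝ} (ha : 0 ≤ a) (hb : 0 ≤ b)
    (ht₀ : 0 ≤ t₀) (ht₁ : 0 ≤ t₁) (h₀ : t₀ * a = s) (h₁ : t₁ * b = s) :
    (Real.sqrt a - Real.sqrt b) ^ 2 ≤
      a * (t₀ * Real.log t₀ - t₀ + 1) + b * (t₁ * Real.log t₁ - t₁ + 1) := by
  have ga := g_nonneg ht₀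
  have gb := g_nonneg ht₁
  rcases ha.eq_or_lt with ha0 | ha'
  · -- a = 0
    have hs0 : s = 0 := by rw [← h₀, ← ha0, mul_zero]
    rcases hb.eq_or_lt with hb0 | hb'
    · rw [← ha0, ← hb0]
      simp
    · have ht10 : t₁ = 0 := by
        rcases mul_eq_zero.mp (h₁.trans hs0) with h | h
        · exact h
        · exact absurd h hb'.ne'
      rw [← ha0, ht10]
      simp [Real.sq_sqrt hb]
  rcases hb.eq_or_lt with hb0 | hb'
  · -- b = 0
    have hs0 : s = 0 := by rw [← h₁, ← hb0, mul_zero]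
    have ht00 : t₀ = 0 := by
      rcases mul_eq_zero.mp (h₀.trans hs0) with h | h
      · exact h
      · exact absurd h ha'.ne'
    rw [← hb0, ht00]
    simp [Real.sq_sqrt ha]
  -- a, b > 0
  have hs : 0 ≤ s := h₀ ▸ mul_nonneg ht₀ ha
  have hsq : (Real.sqrt a - Real.sqrt b) ^ 2 = a + b - 2 * Real.sqrt (a * b) := by
    rw [sub_sq, Real.sq_sqrt ha, Real.sq_sqrt hb, Real.sqrt_mul ha]
    ring
  rcases hs.eq_or_lt with hs0 | hs'
  · -- s = 0
    have ht00 : t₀ = 0 := by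
      rcases mul_eq_zero.mp (h₀.trans hs0.symm) with h | h
      · exact h
      · exact absurd h ha'.ne'
    have ht10 : t₁ = 0 := by
      rcases mul_eq_zero.mp (h₁.trans hs0.symm) with h | h
      · exact h
      · exact absurd h hb'.ne'
    rw [ht00, ht10, hsq]
    simp only [Real.log_zero, mul_zero, zero_mul, sub_zero, zero_sub, neg_add_cancel,
      mul_one, zero_add]
    nlinarith [Real.sqrt_nonneg (a * b)]
  · have ht0e : t₀ = s / a := (eq_div_iff ha'.ne').mpr h₀
    have ht1e : t₁ = s / b := (eq_div_iff hb'.ne').mpr h₁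
    have hc : 0 < Real.sqrt (a * b) := Real.sqrt_pos.mpr (by positivity)
    have hg := gibbs hs hc
    have hlogc : s * Real.log (Real.sqrt (a * b)) * 2 = s * Real.log a + s * Real.log b := by
      rw [Real.log_sqrt (by positivity), Real.log_mul ha'.ne' hb'.ne']
      ring
    have e₀ : a * (t₀ * Real.log t₀ - t₀ + 1) = s * Real.log s - s * Real.log a - s + a := by
      rw [ht0e, Real.log_div hs'.ne' ha'.ne']
      field_simp
    have e₁ : b * (t₁ * Real.log t₁ - t₁ + 1) = s * Real.log s - s * Real.log b - s + b := by
      rw [ht1e, Real.log_div hs'.ne' hb'.ne']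
      field_simp
    rw [e₀, e₁, hsq]
    linarith

private lemma real_eq {a b t₀ t₁ : ℝ} (ha : 0 ≤ a) (hb : 0 ≤ b)
    (ht₀ : 0 ≤ t₀) (ht₁ : 0 ≤ t₁)
    (h₀ : t₀ * a = Real.sqrt (a * b)) (h₁ : t₁ * b = Real.sqrt (a * b)) :
    a * (t₀ * Real.log t₀ - t₀ + 1) + b * (t₁ * Real.log t₁ - t₁ + 1)
      = (Real.sqrt a - Real.sqrt b) ^ 2 := by
  rcases ha.eq_or_lt with ha0 | ha'
  · have hs0 : Real.sqrt (a * b) = 0 := by rw [← ha0, zero_mul, Real.sqrt_zero]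
    rcases hb.eq_or_lt with hb0 | hb'
    · rw [← ha0, ← hb0]
      simp
    · have ht10 : t₁ = 0 := by
        rcases mul_eq_zero.mp (h₁.trans hs0) with h | h
        · exact h
        · exact absurd h hb'.ne'
      rw [← ha0, ht10]
      simp [Real.sq_sqrt hb]
  rcases hb.eq_or_lt with hb0 | hb'
  · have hs0 : Real.sqrt (a * b) = 0 := by rw [← hb0, mul_zero, Real.sqrt_zero]
    have ht00 : t₀ = 0 := by
      rcases mul_eq_zero.mp (h₀.trans hs0) with h | h
      · exact h
      · exact absurd h ha'.ne'
    rw [← hb0, ht00]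
    simp [Real.sq_sqrt ha]
  -- a, b > 0
  have hc : 0 < Real.sqrt (a * b) := Real.sqrt_pos.mpr (by positivity)
  have ht0p : 0 < t₀ := by
    rcases ht₀.eq_or_lt with h | h
    · rw [← h, zero_mul] at h₀
      exact absurd h₀.symm hc.ne'
    · exact h
  have ht1p : 0 < t₁ := by
    rcases ht₁.eq_or_lt with h | h
    · rw [← h, zero_mul] at h₁
      exact absurd h₁.symm hc.ne'
    · exact h
  have hcc : Real.sqrt (a * b) * Real.sqrt (a * b) = a * b :=
    Real.mul_self_sqrt (by positivity)
  have hprod : t₀ * t₁ = 1 := by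
    have h5 : t₀ * a * (t₁ * b) = a * b := by rw [h₀, h₁, hcc]
    have h6 : (t₀ * t₁) * (a * b) = 1 * (a * b) := by linarith [h5]
    exact mul_right_cancel₀ (by positivity) h6
  have hlog : Real.log t₀ + Real.log t₁ = 0 := by
    rw [← Real.log_mul ht0p.ne' ht1p.ne', hprod, Real.log_one]
  have e : a * (t₀ * Real.log t₀ - t₀ + 1) + b * (t₁ * Real.log t₁ - t₁ + 1)
      = Real.sqrt (a * b) * (Real.log t₀ + Real.log t₁) - 2 * Real.sqrt (a * b) + a + b := by
    linear_combination (Real.log t₀ - 1) * h₀ + (Real.log t₁ - 1) * h₁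
  rw [e, hlog, sub_sq, Real.sq_sqrt ha, Real.sq_sqrt hb, Real.sqrt_mul ha]
  ring

private lemma meas_integrand {Ω : Type*} [MeasurableSpace Ω] (γ ν : Measure Ω) :
    Measurable fun x => ENNReal.ofReal
      ((γ.rnDeriv ν x).toReal * Real.log (γ.rnDeriv ν x).toReal
        - (γ.rnDeriv ν x).toReal + 1) := by
  have ht : Measurable fun x => (γ.rnDeriv ν x).toReal :=
    (Measure.measurable_rnDeriv γ ν).ennreal_toReal
  exact ENNReal.measurable_ofReal.comp
    (((ht.mul (Real.measurable_log.comp ht)).sub ht).add measurable_const)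

private lemma H_eq {u v : ℝ≥0∞} (hu : u ≠ ∞) (hv : v ≠ ∞) :
    ((u ^ (1 / 2 : ℝ) - v ^ (1 / 2 : ℝ)) ⊔ (v ^ (1 / 2 : ℝ) - u ^ (1 / 2 : ℝ))) ^ (2 : ℝ)
      = ENNReal.ofReal ((Real.sqrt u.toReal - Real.sqrt v.toReal) ^ 2) := by
  have ha : (0:ℝ) ≤ u.toReal := ENNReal.toReal_nonneg
  have hb : (0:ℝ) ≤ v.toReal := ENNReal.toReal_nonneg
  conv_lhs => rw [← ENNReal.ofReal_toReal hu, ← ENNReal.ofReal_toReal hv]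
  rw [ENNReal.ofReal_rpow_of_nonneg ha (by norm_num),
    ENNReal.ofReal_rpow_of_nonneg hb (by norm_num), ← Real.sqrt_eq_rpow, ← Real.sqrt_eq_rpow,
    ← ENNReal.ofReal_sub _ (Real.sqrt_nonneg _), ← ENNReal.ofReal_sub _ (Real.sqrt_nonneg _)]
  rcases le_total (Real.sqrt v.toReal) (Real.sqrt u.toReal) with h | h
  · rw [sup_eq_left.mpr (ENNReal.ofReal_le_ofReal (by linarith)),
      ENNReal.ofReal_rpow_of_nonneg (by linarith) (by norm_num), Real.rpow_two]
  · rw [sup_eq_right.mpr (ENNReal.ofReal_le_ofReal (by linarith)),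
      ENNReal.ofReal_rpow_of_nonneg (by linarith) (by norm_num), Real.rpow_two]
    congr 1
    ring

/-- `He₂²(μ₀,μ₁) = min_{μ} KL(μ|μ₀) + KL(μ|μ₁)`, the minimum being over all finite
nonnegative measures `μ`. -/
theorem hellinger_sq_eq_min_KL {Ω : Type*} [MeasurableSpace Ω]
    (μ₀ μ₁ : Measure Ω) [IsFiniteMeasure μ₀] [IsFiniteMeasure μ₁]
    (lam : Measure Ω) [SigmaFinite lam] (h₀ : μ₀ ≪ lam) (h₁ : μ₁ ≪ lam) :
    IsLeast {v : ℝ≥0∞ | ∃ μ : Measure Ω, IsFiniteMeasure μ ∧ v = KLdiv μ μ₀ + KLdiv μ μ₁}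
      (∫⁻ x, ((μ₀.rnDeriv lam x ^ (1 / 2 : ℝ) - μ₁.rnDeriv lam x ^ (1 / 2 : ℝ)) ⊔
              (μ₁.rnDeriv lam x ^ (1 / 2 : ℝ) - μ₀.rnDeriv lam x ^ (1 / 2 : ℝ))) ^ (2 : ℝ)
          ∂lam) := by
  have mρ₀ : Measurable (μ₀.rnDeriv lam) := Measure.measurable_rnDeriv _ _
  have mρ₁ : Measurable (μ₁.rnDeriv lam) := Measure.measurable_rnDeriv _ _
  set ρ : Ω → ℝ≥0∞ := fun x => (μ₀.rnDeriv lam x * μ₁.rnDeriv lam x) ^ (1 / 2 : ℝ) with hρdef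
  have mρ : Measurable ρ := (mρ₀.mul mρ₁).pow_const _
  have KL_rw : ∀ (μ ν : Measure Ω) [IsFiniteMeasure ν], μ ≪ ν → ν ≪ lam →
      KLdiv μ ν = ∫⁻ x, ν.rnDeriv lam x * ENNReal.ofReal
        ((μ.rnDeriv ν x).toReal * Real.log (μ.rnDeriv ν x).toReal
          - (μ.rnDeriv ν x).toReal + 1) ∂lam := by
    intro μ ν _ hμν hν
    unfold KLdiv
    rw [if_pos hμν, ← lintegral_rnDeriv_mul hν (meas_integrand μ ν).aemeasurable]
  constructor
  · -- membership: the minimizer is lam.withDensity ρ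
    set μ : Measure Ω := lam.withDensity ρ with hμdef
    have hρ_le : ∀ x, ρ x ≤ μ₀.rnDeriv lam x + μ₁.rnDeriv lam x := by
      intro x
      set A := μ₀.rnDeriv lam x
      set B := μ₁.rnDeriv lam x
      calc (A * B) ^ (1/2 : ℝ) ≤ ((A + B) * (A + B)) ^ (1/2 : ℝ) := by
            apply ENNReal.rpow_le_rpow _ (by norm_num)
            exact mul_le_mul' le_self_add le_add_self
        _ = A + B := by
            rw [← pow_two, ← ENNReal.rpow_natCast (A + B) 2, ← ENNReal.rpow_mul]
            norm_num
    have hfin : IsFiniteMeasure μ := by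
      constructor
      rw [hμdef, withDensity_apply _ MeasurableSet.univ, Measure.restrict_univ]
      calc ∫⁻ x, ρ x ∂lam ≤ ∫⁻ x, (μ₀.rnDeriv lam x + μ₁.rnDeriv lam x) ∂lam :=
            lintegral_mono hρ_le
        _ = (∫⁻ x, μ₀.rnDeriv lam x ∂lam) + ∫⁻ x, μ₁.rnDeriv lam x ∂lam :=
            lintegral_add_left mρ₀ _
        _ ≤ μ₀ Set.univ + μ₁ Set.univ :=
            add_le_add Measure.lintegral_rnDeriv_le Measure.lintegral_rnDeriv_le
        _ < ⊤ := ENNReal.add_lt_top.mpr ⟨measure_lt_top _ _, measure_lt_top _ _⟩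
    haveI := hfin
    have hac : ∀ (ν : Measure Ω), (∀ x, ν.rnDeriv lam x = 0 → ρ x = 0) → μ ≪ ν := by
      intro ν hνρ
      refine Measure.AbsolutelyContinuous.mk fun S hS hS0 => ?_
      have hle : ∫⁻ x in S, ν.rnDeriv lam x ∂lam ≤ ν S := Measure.setLIntegral_rnDeriv_le S
      rw [hS0] at hle
      have hz : ν.rnDeriv lam =ᵐ[lam.restrict S] 0 :=
        (lintegral_eq_zero_iff (Measure.measurable_rnDeriv _ _)).mp
          (le_antisymm hle zero_le)
      rw [hμdef, withDensity_apply _ hS, show (0:ℝ≥0∞) = ∫⁻ _ in S, 0 ∂lam by simp]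
      apply lintegral_congr_ae
      filter_upwards [hz] with x hx
      exact hνρ x hx
    have hac₀ : μ ≪ μ₀ := by
      apply hac
      intro x hx
      simp only [hρdef, hx, zero_mul]
      exact ENNReal.zero_rpow_of_pos (by norm_num)
    have hac₁ : μ ≪ μ₁ := by
      apply hac
      intro x hx
      simp only [hρdef, hx, mul_zero]
      exact ENNReal.zero_rpow_of_pos (by norm_num)
    refine ⟨μ, hfin, ?_⟩
    rw [KL_rw μ μ₀ hac₀ h₀, KL_rw μ μ₁ hac₁ h₁,
      ← lintegral_add_left (f := fun x => μ₀.rnDeriv lam x * ENNReal.ofReal ((μ.rnDeriv μ₀ x).toReal * Real.log (μ.rnDeriv μ₀ x).toReal - (μ.rnDeriv μ₀ x).toReal + 1)) (mρ₀.mul (meas_integrand μ μ₀))]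
    apply lintegral_congr_ae
    have hch₀ : μ.rnDeriv μ₀ * μ₀.rnDeriv lam =ᵐ[lam] μ.rnDeriv lam :=
      Measure.rnDeriv_mul_rnDeriv hac₀
    have hch₁ : μ.rnDeriv μ₁ * μ₁.rnDeriv lam =ᵐ[lam] μ.rnDeriv lam :=
      Measure.rnDeriv_mul_rnDeriv hac₁
    have hσρ : μ.rnDeriv lam =ᵐ[lam] ρ := Measure.rnDeriv_withDensity lam mρ
    filter_upwards [hch₀, hch₁, hσρ, Measure.rnDeriv_lt_top μ₀ lam,
      Measure.rnDeriv_lt_top μ₁ lam] with x e0 e1 eσ hA hB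
    rw [Pi.mul_apply] at e0 e1
    have hρx : (ρ x).toReal
        = Real.sqrt ((μ₀.rnDeriv lam x).toReal * (μ₁.rnDeriv lam x).toReal) := by
      rw [hρdef, ← ENNReal.toReal_rpow, ENNReal.toReal_mul, Real.sqrt_eq_rpow]
    have hT₀ : (μ.rnDeriv μ₀ x).toReal * (μ₀.rnDeriv lam x).toReal
        = Real.sqrt ((μ₀.rnDeriv lam x).toReal * (μ₁.rnDeriv lam x).toReal) := by
      rw [← ENNReal.toReal_mul, e0, eσ, hρx]
    have hT₁ : (μ.rnDeriv μ₁ x).toReal * (μ₁.rnDeriv lam x).toReal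
        = Real.sqrt ((μ₀.rnDeriv lam x).toReal * (μ₁.rnDeriv lam x).toReal) := by
      rw [← ENNReal.toReal_mul, e1, eσ, hρx]
    have key := real_eq ENNReal.toReal_nonneg ENNReal.toReal_nonneg
      ENNReal.toReal_nonneg ENNReal.toReal_nonneg hT₀ hT₁
    rw [H_eq hA.ne hB.ne, ← key,
      ENNReal.ofReal_add (mul_nonneg ENNReal.toReal_nonneg (g_nonneg ENNReal.toReal_nonneg))
        (mul_nonneg ENNReal.toReal_nonneg (g_nonneg ENNReal.toReal_nonneg)),
      ENNReal.ofReal_mul ENNReal.toReal_nonneg, ENNReal.ofReal_mul ENNReal.toReal_nonneg,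
      ENNReal.ofReal_toReal hA.ne, ENNReal.ofReal_toReal hB.ne]
  · -- lower bound
    rintro v ⟨μ, hμfin, rfl⟩
    haveI := hμfin
    by_cases hac₀ : μ ≪ μ₀
    swap
    · rw [show KLdiv μ μ₀ = ⊤ from if_neg hac₀, top_add]
      exact le_top
    by_cases hac₁ : μ ≪ μ₁
    swap
    · rw [show KLdiv μ μ₁ = ⊤ from if_neg hac₁, add_top]
      exact le_top
    rw [KL_rw μ μ₀ hac₀ h₀, KL_rw μ μ₁ hac₁ h₁,
      ← lintegral_add_left (f := fun x => μ₀.rnDeriv lam x * ENNReal.ofReal ((μ.rnDeriv μ₀ x).toReal * Real.log (μ.rnDeriv μ₀ x).toReal - (μ.rnDeriv μ₀ x).toReal + 1)) (mρ₀.mul (meas_integrand μ μ₀))]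
    apply lintegral_mono_ae
    have hch₀ : μ.rnDeriv μ₀ * μ₀.rnDeriv lam =ᵐ[lam] μ.rnDeriv lam :=
      Measure.rnDeriv_mul_rnDeriv hac₀
    have hch₁ : μ.rnDeriv μ₁ * μ₁.rnDeriv lam =ᵐ[lam] μ.rnDeriv lam :=
      Measure.rnDeriv_mul_rnDeriv hac₁
    filter_upwards [hch₀, hch₁, Measure.rnDeriv_lt_top μ₀ lam,
      Measure.rnDeriv_lt_top μ₁ lam] with x e0 e1 hA hB
    rw [Pi.mul_apply] at e0 e1
    have hT₀ : (μ.rnDeriv μ₀ x).toReal * (μ₀.rnDeriv lam x).toReal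
        = (μ.rnDeriv lam x).toReal := by rw [← ENNReal.toReal_mul, e0]
    have hT₁ : (μ.rnDeriv μ₁ x).toReal * (μ₁.rnDeriv lam x).toReal
        = (μ.rnDeriv lam x).toReal := by rw [← ENNReal.toReal_mul, e1]
    have key := real_key ENNReal.toReal_nonneg ENNReal.toReal_nonneg
      ENNReal.toReal_nonneg ENNReal.toReal_nonneg hT₀ hT₁
    rw [H_eq hA.ne hB.ne]
    calc ENNReal.ofReal ((Real.sqrt (μ₀.rnDeriv lam x).toReal
            - Real.sqrt (μ₁.rnDeriv lam x).toReal) ^ 2)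
        ≤ ENNReal.ofReal ((μ₀.rnDeriv lam x).toReal
            * ((μ.rnDeriv μ₀ x).toReal * Real.log (μ.rnDeriv μ₀ x).toReal
              - (μ.rnDeriv μ₀ x).toReal + 1)
          + (μ₁.rnDeriv lam x).toReal
            * ((μ.rnDeriv μ₁ x).toReal * Real.log (μ.rnDeriv μ₁ x).toReal
              - (μ.rnDeriv μ₁ x).toReal + 1)) := ENNReal.ofReal_le_ofReal key
      _ = _ := by
          rw [ENNReal.ofReal_add
              (mul_nonneg ENNReal.toReal_nonneg (g_nonneg ENNReal.toReal_nonneg))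
              (mul_nonneg ENNReal.toReal_nonneg (g_nonneg ENNReal.toReal_nonneg)),
            ENNReal.ofReal_mul ENNReal.toReal_nonneg,
            ENNReal.ofReal_mul ENNReal.toReal_nonneg,
            ENNReal.ofReal_toReal hA.ne, ENNReal.ofReal_toReal hB.ne]
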